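/- (Maximal Lifting Theorem.) Let n ≥ 1, let T be an n-periodic 2-triangulation on ℤ, and let e be an edge of length at most 2n with e ∉ T. Then T ∪ {e} contains a 3-crossing; that is, there exist edges f₁, f₂ ∈ T such that {e, f₁, f₂} is a set of three pairwise crossing edges. -/

import Mathlib

/- Edges on the universal cover of the half-cylinder, modeled by the integers.
   An edge is an unordered pair of distinct integers, represented as an ordered
   pair `(a, b)` with `a < b` (validity). -/

namespace Multitriangulation

abbrev Edge := ℤ × ℤ

/-- Translate an edge by `t`: `[a,b] + t = [a+t, b+t]`. -/
def shift (e : Edge) (t : ℤ) : Edge := (e.1 + t, e.2 + t)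

/-- Two edges (as unordered pairs of integers) cross:
their endpoints strictly interleave. -/
def Crosses (e f : Edge) : Prop :=
  (min e.1 e.2 < min f.1 f.2 ∧ min f.1 f.2 < max e.1 e.2 ∧ max e.1 e.2 < max f.1 f.2) ∨
  (min f.1 f.2 < min e.1 e.2 ∧ min e.1 e.2 < max f.1 f.2 ∧ max f.1 f.2 < max e.1 e.2)

/-- A finite set of edges is an `l`-crossing if it consists of `l` pairwise
crossing edges. -/
def IsCrossing (l : ℕ) (S : Finset Edge) : Prop :=
  S.card = l ∧ ∀ e ∈ S, ∀ f ∈ S, e ≠ f → Crosses e f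

/-- A set of edges is `l`-crossing-free if no `l` of its edges pairwise cross. -/
def CrossingFree (l : ℕ) (E : Set Edge) : Prop :=
  ¬ ∃ S : Finset Edge, ↑S ⊆ E ∧ IsCrossing l S

/-- A set of edges is `n`-periodic if `e ∈ E ↔ e + n ∈ E`. -/
def Periodic (n : ℕ) (E : Set Edge) : Prop := ∀ e, e ∈ E ↔ shift e (n : ℤ) ∈ E

/-- All members are genuine edges `[a,b]` with `a < b`. -/
def ValidEdges (E : Set Edge) : Prop := ∀ e ∈ E, e.1 < e.2

/-- An `n`-periodic `k`-triangulation on `ℤ`: an `n`-periodic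
`(k+1)`-crossing-free set of edges that is maximal under inclusion among
`n`-periodic `(k+1)`-crossing-free sets of edges. -/
def IsTriangulation (n k : ℕ) (T : Set Edge) : Prop :=
  ValidEdges T ∧ Periodic n T ∧ CrossingFree (k+1) T ∧
  ∀ T', ValidEdges T' → Periodic n T' → CrossingFree (k+1) T' → T ⊆ T' → T' = T

/-- The cyclic order relation on integers: `cyc a b c` iff
`a<b<c` or `b<c<a` or `c<a<b`. -/
def cyc (a b c : ℤ) : Prop := (a < b ∧ b < c) ∨ (b < c ∧ c < a) ∨ (c < a ∧ a < b)

/-- Membership of the unordered edge `[a,b]` in an edge set. -/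
def EdgeMem (T : Set Edge) (a b : ℤ) : Prop := (a, b) ∈ T ∨ (b, a) ∈ T

/-- `∠(u,v,w)` is an angle of `T`: the edges `[u,v],[v,w]` lie in `T`,
`cyc u v w`, and `T` has no edge `[v,w₀]` with `w₀ ≺ u ≺ v ≺ w` in cyclic
order. -/
def IsAngle (T : Set Edge) (u v w : ℤ) : Prop :=
  EdgeMem T u v ∧ EdgeMem T v w ∧ cyc u v w ∧
  ¬ ∃ w₀ : ℤ, EdgeMem T v w₀ ∧ cyc w₀ u v ∧ cyc w₀ v w

/-! ### Auxiliary lemmas -/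

private lemma crosses_symm {e f : Edge} (h : Crosses e f) : Crosses f e := by
  rcases h with h | h
  · exact Or.inr h
  · exact Or.inl h

private lemma crosses_irrefl (e : Edge) : ¬ Crosses e e := by
  simp only [Crosses]; omega

private lemma crosses_pair_swap (w : Edge) (x y : ℤ) :
    Crosses w (x, y) ↔ Crosses w (y, x) := by
  simp only [Crosses]; omega

private lemma crosses_shift_iff (g h : Edge) (t : ℤ) :
    Crosses (g.1 + t, g.2 + t) (h.1 + t, h.2 + t) ↔ Crosses g h := by
  simp only [Crosses]; omega

private lemma crosses_iff {c d e f : ℤ} (h1 : c < d) (h2 : e < f) :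
    Crosses (c, d) (e, f) ↔ ((c < e ∧ e < d ∧ d < f) ∨ (e < c ∧ c < f ∧ f < d)) := by
  simp only [Crosses]; omega

private lemma periodic_shift {n : ℕ} {T : Set Edge} (hper : Periodic n T) :
    ∀ (k : ℤ) (e : Edge), e ∈ T ↔ shift e (k * (n : ℤ)) ∈ T := by
  intro k
  induction k using Int.induction_on with
  | zero => intro e; simp [shift]
  | succ i ih =>
      intro e
      have h3 : shift (shift e ((i : ℤ) * (n : ℤ))) (n : ℤ)
          = shift e (((i : ℤ) + 1) * (n : ℤ)) := by
        simp only [shift, Prod.mk.injEq]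
        constructor <;> ring
      rw [ih e, hper (shift e ((i : ℤ) * (n : ℤ))), h3]
  | pred i ih =>
      intro e
      have h3 : shift (shift e ((-(i : ℤ) - 1) * (n : ℤ))) (n : ℤ)
          = shift e ((-(i : ℤ)) * (n : ℤ)) := by
        simp only [shift, Prod.mk.injEq]
        constructor <;> ring
      constructor
      · intro he
        have h1 := (ih e).mp he
        rw [← h3] at h1
        exact (hper _).mpr h1
      · intro he
        have h1 : shift (shift e ((-(i : ℤ) - 1) * (n : ℤ))) (n : ℤ) ∈ T := (hper _).mp he
        rw [h3] at h1
        exact (ih e).mpr h1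

private lemma stuck_shift {n : ℕ} {T : Set Edge} (hper : Periodic n T) {p q : ℤ}
    (hstuck : ∀ g h : Edge, g ∈ T → h ∈ T → Crosses g (p, q) → Crosses h (p, q) →
      Crosses g h → False)
    (k : ℤ) (g h : Edge) (hg : g ∈ T) (hh : h ∈ T)
    (hcg : Crosses g (p + k * (n : ℤ), q + k * (n : ℤ)))
    (hch : Crosses h (p + k * (n : ℤ), q + k * (n : ℤ)))
    (hgh : Crosses g h) : False := by
  refine hstuck (g.1 + -(k * (n : ℤ)), g.2 + -(k * (n : ℤ)))
    (h.1 + -(k * (n : ℤ)), h.2 + -(k * (n : ℤ))) ?_ ?_ ?_ ?_ ?_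
  · refine (periodic_shift hper k _).mpr ?_
    have h3 : shift ((g.1 + -(k * (n : ℤ)), g.2 + -(k * (n : ℤ))) : Edge) (k * (n : ℤ)) = g := by
      simp [shift]
    rw [h3]; exact hg
  · refine (periodic_shift hper k _).mpr ?_
    have h3 : shift ((h.1 + -(k * (n : ℤ)), h.2 + -(k * (n : ℤ))) : Edge) (k * (n : ℤ)) = h := by
      simp [shift]
    rw [h3]; exact hh
  · have H := (crosses_shift_iff g (p + k * (n : ℤ), q + k * (n : ℤ)) (-(k * (n : ℤ)))).mpr hcg
    simpa using H
  · have H := (crosses_shift_iff h (p + k * (n : ℤ), q + k * (n : ℤ)) (-(k * (n : ℤ)))).mpr hch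
    simpa using H
  · exact (crosses_shift_iff g h (-(k * (n : ℤ)))).mpr hgh

private lemma extract {n : ℕ} (hn : 1 ≤ n) {T : Set Edge}
    (hval : ValidEdges T) (hper : Periodic n T) (hfree : CrossingFree 3 T)
    (hmax : ∀ T', ValidEdges T' → Periodic n T' → CrossingFree 3 T' → T ⊆ T' → T' = T)
    {p q : ℤ} (hpq : p < q) (hlen : q - p ≤ 2 * (n : ℤ)) (hnot : (p, q) ∉ T)
    (hstuck : ∀ g h : Edge, g ∈ T → h ∈ T → Crosses g (p, q) → Crosses h (p, q) →
      Crosses g h → False) :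
    ∃ c d : ℤ, (c, d) ∈ T ∧ c < d ∧ Crosses (c, d) (p, q) ∧
      Crosses (c, d) (p + (n : ℤ), q + (n : ℤ)) ∧ (n : ℤ) < q - p := by
  have hN : (1 : ℤ) ≤ (n : ℤ) := by exact_mod_cast hn
  by_cases hEX : ∃ c d : ℤ, (c, d) ∈ T ∧ c < d ∧ Crosses (c, d) (p, q) ∧
      Crosses (c, d) (p + (n : ℤ), q + (n : ℤ)) ∧ (n : ℤ) < q - p
  · exact hEX
  exfalso
  set T' := T ∪ {x : Edge | ∃ k : ℤ, x = (p + k * (n : ℤ), q + k * (n : ℤ))} with hT'def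
  have hsubT : T ⊆ T' := Set.subset_union_left
  have hval' : ValidEdges T' := by
    rintro e (he | ⟨k, rfl⟩)
    · exact hval e he
    · show p + k * (n : ℤ) < q + k * (n : ℤ)
      linarith
  have hper' : Periodic n T' := by
    intro e
    constructor
    · rintro (he | ⟨k, rfl⟩)
      · exact Or.inl ((hper e).mp he)
      · refine Or.inr ⟨k + 1, ?_⟩
        simp only [shift, Prod.mk.injEq]
        constructor <;> ring
    · rintro (he | ⟨k, hk⟩)
      · exact Or.inl ((hper e).mpr he)
      · refine Or.inr ⟨k - 1, ?_⟩
        obtain ⟨e1, e2⟩ := e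
        simp only [shift, Prod.mk.injEq] at hk ⊢
        have hs : (k - 1) * (n : ℤ) = k * (n : ℤ) - (n : ℤ) := by ring
        constructor
        · rw [hs]; linarith [hk.1]
        · rw [hs]; linarith [hk.2]
  have hadj : ∀ k k' : ℤ, Crosses (p + k * (n : ℤ), q + k * (n : ℤ))
      (p + k' * (n : ℤ), q + k' * (n : ℤ)) →
      ((k' = k + 1 ∨ k = k' + 1) ∧ (n : ℤ) < q - p) := by
    intro k k' hc
    rw [crosses_iff (by linarith) (by linarith)] at hc
    have hmul : ∀ m m' : ℤ, m ≤ m' → m * (n : ℤ) ≤ m' * (n : ℤ) := fun m m' h =>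
      mul_le_mul_of_nonneg_right h (by linarith)
    rcases hc with ⟨e1, e2, e3⟩ | ⟨e1, e2, e3⟩
    · have hkk' : k + 1 ≤ k' := by
        by_contra hcon
        have := hmul k' k (by omega)
        linarith
      have h1 : (k + 1) * (n : ℤ) ≤ k' * (n : ℤ) := hmul _ _ hkk'
      have h1' : (k + 1) * (n : ℤ) = k * (n : ℤ) + (n : ℤ) := by ring
      refine ⟨?_, by linarith⟩
      left
      by_contra hcon
      have h2 : (k + 2) * (n : ℤ) ≤ k' * (n : ℤ) := hmul _ _ (by omega)
      have h2' : (k + 2) * (n : ℤ) = k * (n : ℤ) + 2 * (n : ℤ) := by ring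
      linarith
    · have hkk' : k' + 1 ≤ k := by
        by_contra hcon
        have := hmul k k' (by omega)
        linarith
      have h1 : (k' + 1) * (n : ℤ) ≤ k * (n : ℤ) := hmul _ _ hkk'
      have h1' : (k' + 1) * (n : ℤ) = k' * (n : ℤ) + (n : ℤ) := by ring
      refine ⟨?_, by linarith⟩
      right
      by_contra hcon
      have h2 : (k' + 2) * (n : ℤ) ≤ k * (n : ℤ) := hmul _ _ (by omega)
      have h2' : (k' + 2) * (n : ℤ) = k' * (n : ℤ) + 2 * (n : ℤ) := by ring
      linarith
  have twoshift : ∀ (k k' : ℤ) (g : Edge), g ∈ T →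
      Crosses (p + k * (n : ℤ), q + k * (n : ℤ)) (p + k' * (n : ℤ), q + k' * (n : ℤ)) →
      Crosses g (p + k * (n : ℤ), q + k * (n : ℤ)) →
      Crosses g (p + k' * (n : ℤ), q + k' * (n : ℤ)) → False := by
    intro k k' g hg hcc hc1 hc2
    obtain ⟨hor, hNlt⟩ := hadj k k' hcc
    rcases hor with rfl | rfl
    · apply hEX
      refine ⟨g.1 + -(k * (n : ℤ)), g.2 + -(k * (n : ℤ)), ?_, ?_, ?_, ?_, hNlt⟩
      · refine (periodic_shift hper k _).mpr ?_
        have h3 : shift ((g.1 + -(k * (n : ℤ)), g.2 + -(k * (n : ℤ))) : Edge) (k * (n : ℤ))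
            = g := by simp [shift]
        rw [h3]; exact hg
      · have := hval g hg; linarith
      · have H := (crosses_shift_iff g (p + k * (n : ℤ), q + k * (n : ℤ))
          (-(k * (n : ℤ)))).mpr hc1
        simpa using H
      · have H := (crosses_shift_iff g (p + (k + 1) * (n : ℤ), q + (k + 1) * (n : ℤ))
          (-(k * (n : ℤ)))).mpr hc2
        have e1 : p + (k + 1) * (n : ℤ) + -(k * (n : ℤ)) = p + (n : ℤ) := by ring
        have e2 : q + (k + 1) * (n : ℤ) + -(k * (n : ℤ)) = q + (n : ℤ) := by ring
        rw [e1, e2] at H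
        exact H
    · apply hEX
      refine ⟨g.1 + -(k' * (n : ℤ)), g.2 + -(k' * (n : ℤ)), ?_, ?_, ?_, ?_, hNlt⟩
      · refine (periodic_shift hper k' _).mpr ?_
        have h3 : shift ((g.1 + -(k' * (n : ℤ)), g.2 + -(k' * (n : ℤ))) : Edge) (k' * (n : ℤ))
            = g := by simp [shift]
        rw [h3]; exact hg
      · have := hval g hg; linarith
      · have H := (crosses_shift_iff g (p + k' * (n : ℤ), q + k' * (n : ℤ))
          (-(k' * (n : ℤ)))).mpr hc2
        simpa using H
      · have H := (crosses_shift_iff g (p + (k' + 1) * (n : ℤ), q + (k' + 1) * (n : ℤ))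
          (-(k' * (n : ℤ)))).mpr hc1
        have e1 : p + (k' + 1) * (n : ℤ) + -(k' * (n : ℤ)) = p + (n : ℤ) := by ring
        have e2 : q + (k' + 1) * (n : ℤ) + -(k' * (n : ℤ)) = q + (n : ℤ) := by ring
        rw [e1, e2] at H
        exact H
  have hfree' : CrossingFree 3 T' := by
    rintro ⟨S, hsub, hcard, hcr⟩
    obtain ⟨x, y, z, hxy, hxz, hyz, rfl⟩ := Finset.card_eq_three.mp hcard
    have hx : x ∈ T' := hsub (by simp)
    have hy : y ∈ T' := hsub (by simp)
    have hz : z ∈ T' := hsub (by simp)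
    have cxy : Crosses x y := hcr x (by simp) y (by simp) hxy
    have cxz : Crosses x z := hcr x (by simp) z (by simp) hxz
    have cyz : Crosses y z := hcr y (by simp) z (by simp) hyz
    simp only [hT'def, Set.mem_union, Set.mem_setOf_eq] at hx hy hz
    rcases hx with hxT | ⟨kx, rfl⟩ <;> rcases hy with hyT | ⟨ky, rfl⟩ <;>
      rcases hz with hzT | ⟨kz, rfl⟩
    · refine hfree ⟨{x, y, z}, ?_, hcard, hcr⟩
      intro w hw
      simp only [Finset.coe_insert, Set.mem_insert_iff, Finset.coe_singleton,
        Set.mem_singleton_iff] at hw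
      rcases hw with rfl | rfl | rfl <;> assumption
    · exact stuck_shift hper hstuck kz x y hxT hyT cxz cyz cxy
    · exact stuck_shift hper hstuck ky x z hxT hzT cxy (crosses_symm cyz) cxz
    · exact twoshift ky kz x hxT cyz cxy cxz
    · exact stuck_shift hper hstuck kx y z hyT hzT (crosses_symm cxy) (crosses_symm cxz) cyz
    · exact twoshift kx kz y hyT cxz (crosses_symm cxy) cyz
    · exact twoshift kx ky z hzT cxy (crosses_symm cxz) (crosses_symm cyz)
    · obtain ⟨o1, -⟩ := hadj _ _ cxy
      obtain ⟨o2, -⟩ := hadj _ _ cxz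
      obtain ⟨o3, -⟩ := hadj _ _ cyz
      omega
  have hTT := hmax T' hval' hper' hfree' hsubT
  apply hnot
  have hmem : (p, q) ∈ T' := Or.inr ⟨0, by simp⟩
  rwa [hTT] at hmem

private lemma key {n : ℕ} (hn : 1 ≤ n) {T : Set Edge}
    (hval : ValidEdges T) (hper : Periodic n T) (hfree : CrossingFree 3 T)
    (hmax : ∀ T', ValidEdges T' → Periodic n T' → CrossingFree 3 T' → T ⊆ T' → T' = T)
    {a b : ℤ} (hab : a < b) (hlen : b - a ≤ 2 * (n : ℤ)) (hnot : (a, b) ∉ T) :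
    ∃ f₁ f₂ : Edge, f₁ ∈ T ∧ f₂ ∈ T ∧ f₁ ≠ f₂ ∧
      Crosses f₁ f₂ ∧ Crosses f₁ (a, b) ∧ Crosses f₂ (a, b) := by
  have hN : (1 : ℤ) ≤ (n : ℤ) := by exact_mod_cast hn
  by_contra hgoal
  push_neg at hgoal
  have hstuck : ∀ g h : Edge, g ∈ T → h ∈ T → Crosses g (a, b) → Crosses h (a, b) →
      Crosses g h → False := by
    intro g h hg hh hcg hch hgh
    exact hgoal g h hg hh (by rintro rfl; exact crosses_irrefl g hgh) hgh hcg hch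
  have hstuckN : ∀ g h : Edge, g ∈ T → h ∈ T → Crosses g (a + (n : ℤ), b + (n : ℤ)) →
      Crosses h (a + (n : ℤ), b + (n : ℤ)) → Crosses g h → False := by
    intro g h hg hh hcg hch hgh
    refine stuck_shift hper hstuck 1 g h hg hh ?_ ?_ hgh
    · have e1 : a + (n : ℤ) = a + 1 * (n : ℤ) := by ring
      have e2 : b + (n : ℤ) = b + 1 * (n : ℤ) := by ring
      rwa [e1, e2] at hcg
    · have e1 : a + (n : ℤ) = a + 1 * (n : ℤ) := by ring
      have e2 : b + (n : ℤ) = b + 1 * (n : ℤ) := by ring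
      rwa [e1, e2] at hch
  have memS : ∀ c d : ℤ, (c, d) ∈ T → ((c + (n : ℤ), d + (n : ℤ)) : Edge) ∈ T := by
    intro c d h
    have H := (periodic_shift hper 1 (c, d)).mp h
    simpa [shift] using H
  have memS' : ∀ c d : ℤ, (c, d) ∈ T → ((c - (n : ℤ), d - (n : ℤ)) : Edge) ∈ T := by
    intro c d h
    have H := (periodic_shift hper (-1) (c, d)).mp h
    simpa [shift, sub_eq_add_neg] using H
  obtain ⟨c, d, hfT, hcd, hc1, hc2, hNlt⟩ :=
    extract hn hval hper hfree hmax hab hlen hnot hstuck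
  rw [crosses_iff hcd hab] at hc1
  rw [crosses_iff hcd (by linarith : a + (n : ℤ) < b + (n : ℤ))] at hc2
  rcases hc1 with ⟨h1, h2, h3⟩ | ⟨h1, h2, h3⟩
  · rcases hc2 with ⟨h4, h5, h6⟩ | ⟨h4, h5, h6⟩
    · -- combo B&B' : c<a, a<d, d<b ; c<a+N, a+N<d, d<b+N
      rcases lt_or_ge a (c + (n : ℤ)) with hca | hca
      · exact hstuck (c, d) (c + (n : ℤ), d + (n : ℤ)) hfT (memS c d hfT)
          ((crosses_iff hcd hab).mpr (Or.inl ⟨h1, h2, h3⟩))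
          ((crosses_iff (by linarith) hab).mpr (Or.inr ⟨hca, by linarith, by linarith⟩))
          ((crosses_iff hcd (by linarith)).mpr (Or.inl ⟨by linarith, by linarith, by linarith⟩))
      · exact hstuck (c - (n : ℤ), d - (n : ℤ)) (c, d) (memS' c d hfT) hfT
          ((crosses_iff (by linarith) hab).mpr (Or.inl ⟨by linarith, by linarith, by linarith⟩))
          ((crosses_iff hcd hab).mpr (Or.inl ⟨h1, h2, h3⟩))
          ((crosses_iff (by linarith) hcd).mpr (Or.inl ⟨by linarith, by linarith, by linarith⟩))
    · -- combo B&A' : impossible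
      linarith
  · rcases hc2 with ⟨h4, h5, h6⟩ | ⟨h4, h5, h6⟩
    · -- combo A&B' : a<c, c<b, b<d ; c<a+N, a+N<d, d<b+N
      rcases lt_or_ge (n : ℤ) (d - c) with hdc | hdc
      · exact hstuck (c - (n : ℤ), d - (n : ℤ)) (c, d) (memS' c d hfT) hfT
          ((crosses_iff (by linarith) hab).mpr (Or.inl ⟨by linarith, by linarith, by linarith⟩))
          ((crosses_iff hcd hab).mpr (Or.inr ⟨h1, h2, h3⟩))
          ((crosses_iff (by linarith) hcd).mpr (Or.inl ⟨by linarith, by linarith, by linarith⟩))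
      · -- HARD case: use the auxiliary edge (a, a+n)
        have hnotin' : ((a, a + (n : ℤ)) : Edge) ∉ T := by
          intro hmem
          exact hstuck (c, d) (a + (n : ℤ), a + (n : ℤ) + (n : ℤ)) hfT (memS a (a + (n : ℤ)) hmem)
            ((crosses_iff hcd hab).mpr (Or.inr ⟨h1, h2, h3⟩))
            ((crosses_iff (by linarith) hab).mpr (Or.inr ⟨by linarith, by linarith, by linarith⟩))
            ((crosses_iff hcd (by linarith)).mpr (Or.inl ⟨h4, h5, by linarith⟩))
        have hstuck' : ∀ g h : Edge, g ∈ T → h ∈ T → Crosses g (a, a + (n : ℤ)) →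
            Crosses h (a, a + (n : ℤ)) → Crosses g h → False := by
          intro g h hg hh hcg hch hgh
          obtain ⟨x, y⟩ := g
          obtain ⟨u, v⟩ := h
          have hxy : x < y := hval _ hg
          have huv : u < v := hval _ hh
          have hgh0 := hgh
          rw [crosses_iff hxy (by linarith : a < a + (n : ℤ))] at hcg
          rw [crosses_iff huv (by linarith : a < a + (n : ℤ))] at hch
          rw [crosses_iff hxy huv] at hgh
          rcases hcg with ⟨g1, g2, g3⟩ | ⟨g1, g2, g3⟩
          · rcases hch with ⟨i1, i2, i3⟩ | ⟨i1, i2, i3⟩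
            · -- LL
              exact hstuck (x, y) (u, v) hg hh
                ((crosses_iff hxy hab).mpr (Or.inl ⟨g1, g2, by linarith⟩))
                ((crosses_iff huv hab).mpr (Or.inl ⟨i1, i2, by linarith⟩)) hgh0
            · -- LR
              rcases lt_or_ge b v with hbv | hbv
              · exact hstuck (x, y) (u, v) hg hh
                  ((crosses_iff hxy hab).mpr (Or.inl ⟨g1, g2, by linarith⟩))
                  ((crosses_iff huv hab).mpr (Or.inr ⟨i1, by linarith, hbv⟩)) hgh0
              · rcases lt_or_ge c y with hcy | hcy
                · exact hstuck (c, d) (x, y) hfT hg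
                    ((crosses_iff hcd hab).mpr (Or.inr ⟨h1, h2, h3⟩))
                    ((crosses_iff hxy hab).mpr (Or.inl ⟨g1, g2, by linarith⟩))
                    ((crosses_iff hcd hxy).mpr (Or.inr ⟨by linarith, hcy, by linarith⟩))
                · rcases lt_or_ge u c with huc | huc
                  · exact hstuckN (c, d) (u, v) hfT hh
                      ((crosses_iff hcd (by linarith)).mpr (Or.inl ⟨h4, h5, h6⟩))
                      ((crosses_iff huv (by linarith)).mpr (Or.inl ⟨i2, i3, by linarith⟩))
                      ((crosses_iff hcd huv).mpr (Or.inr ⟨huc, by linarith, by linarith⟩))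
                  · rcases hgh with ⟨j1, j2, j3⟩ | ⟨j1, j2, j3⟩ <;> linarith
          · rcases hch with ⟨i1, i2, i3⟩ | ⟨i1, i2, i3⟩
            · -- RL
              rcases lt_or_ge b y with hby | hby
              · exact hstuck (x, y) (u, v) hg hh
                  ((crosses_iff hxy hab).mpr (Or.inr ⟨g1, by linarith, hby⟩))
                  ((crosses_iff huv hab).mpr (Or.inl ⟨i1, i2, by linarith⟩)) hgh0
              · rcases lt_or_ge c v with hcv | hcv
                · exact hstuck (c, d) (u, v) hfT hh
                    ((crosses_iff hcd hab).mpr (Or.inr ⟨h1, h2, h3⟩))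
                    ((crosses_iff huv hab).mpr (Or.inl ⟨i1, i2, by linarith⟩))
                    ((crosses_iff hcd huv).mpr (Or.inr ⟨by linarith, hcv, by linarith⟩))
                · rcases lt_or_ge x c with hxc | hxc
                  · exact hstuckN (c, d) (x, y) hfT hg
                      ((crosses_iff hcd (by linarith)).mpr (Or.inl ⟨h4, h5, h6⟩))
                      ((crosses_iff hxy (by linarith)).mpr (Or.inl ⟨g2, g3, by linarith⟩))
                      ((crosses_iff hcd hxy).mpr (Or.inr ⟨hxc, by linarith, by linarith⟩))
                  · rcases hgh with ⟨j1, j2, j3⟩ | ⟨j1, j2, j3⟩ <;> linarith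
            · -- RR
              rcases lt_or_ge b y with hby | hby <;> rcases lt_or_ge b v with hbv | hbv
              · exact hstuck (x, y) (u, v) hg hh
                  ((crosses_iff hxy hab).mpr (Or.inr ⟨g1, by linarith, hby⟩))
                  ((crosses_iff huv hab).mpr (Or.inr ⟨i1, by linarith, hbv⟩)) hgh0
              · rcases lt_or_ge y (b + (n : ℤ)) with hyb | hyb
                · exact hstuckN (x, y) (u, v) hg hh
                    ((crosses_iff hxy (by linarith)).mpr (Or.inl ⟨g2, g3, hyb⟩))
                    ((crosses_iff huv (by linarith)).mpr (Or.inl ⟨i2, i3, by linarith⟩)) hgh0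
                · rcases lt_or_ge c x with hcx | hcx
                  · exact hstuck (c, d) (x, y) hfT hg
                      ((crosses_iff hcd hab).mpr (Or.inr ⟨h1, h2, h3⟩))
                      ((crosses_iff hxy hab).mpr (Or.inr ⟨g1, by linarith, hby⟩))
                      ((crosses_iff hcd hxy).mpr (Or.inl ⟨hcx, by linarith, by linarith⟩))
                  · rcases lt_or_ge u c with huc | huc
                    · exact hstuckN (c, d) (u, v) hfT hh
                        ((crosses_iff hcd (by linarith)).mpr (Or.inl ⟨h4, h5, h6⟩))
                        ((crosses_iff huv (by linarith)).mpr (Or.inl ⟨i2, i3, by linarith⟩))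
                        ((crosses_iff hcd huv).mpr (Or.inr ⟨huc, by linarith, by linarith⟩))
                    · rcases hgh with ⟨j1, j2, j3⟩ | ⟨j1, j2, j3⟩ <;> linarith
              · rcases lt_or_ge v (b + (n : ℤ)) with hvb | hvb
                · exact hstuckN (x, y) (u, v) hg hh
                    ((crosses_iff hxy (by linarith)).mpr (Or.inl ⟨g2, g3, by linarith⟩))
                    ((crosses_iff huv (by linarith)).mpr (Or.inl ⟨i2, i3, hvb⟩)) hgh0
                · rcases lt_or_ge c u with hcu | hcu
                  · exact hstuck (c, d) (u, v) hfT hh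
                      ((crosses_iff hcd hab).mpr (Or.inr ⟨h1, h2, h3⟩))
                      ((crosses_iff huv hab).mpr (Or.inr ⟨i1, by linarith, hbv⟩))
                      ((crosses_iff hcd huv).mpr (Or.inl ⟨hcu, by linarith, by linarith⟩))
                  · rcases lt_or_ge x c with hxc | hxc
                    · exact hstuckN (c, d) (x, y) hfT hg
                        ((crosses_iff hcd (by linarith)).mpr (Or.inl ⟨h4, h5, h6⟩))
                        ((crosses_iff hxy (by linarith)).mpr (Or.inl ⟨g2, g3, by linarith⟩))
                        ((crosses_iff hcd hxy).mpr (Or.inr ⟨hxc, by linarith, by linarith⟩))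
                    · rcases hgh with ⟨j1, j2, j3⟩ | ⟨j1, j2, j3⟩ <;> linarith
              · exact hstuckN (x, y) (u, v) hg hh
                  ((crosses_iff hxy (by linarith)).mpr (Or.inl ⟨g2, g3, by linarith⟩))
                  ((crosses_iff huv (by linarith)).mpr (Or.inl ⟨i2, i3, by linarith⟩)) hgh0
        obtain ⟨-, -, -, -, -, -, hbad⟩ :=
          extract hn hval hper hfree hmax (show a < a + (n : ℤ) by linarith)
            (show a + (n : ℤ) - a ≤ 2 * (n : ℤ) by linarith) hnotin' hstuck'
        linarith
    · -- combo A&A' : a<c, c<b, b<d ; a+N<c, c<b+N, b+N<d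
      exact hstuck (c - (n : ℤ), d - (n : ℤ)) (c, d) (memS' c d hfT) hfT
        ((crosses_iff (by linarith) hab).mpr (Or.inr ⟨by linarith, by linarith, by linarith⟩))
        ((crosses_iff hcd hab).mpr (Or.inr ⟨h1, h2, h3⟩))
        ((crosses_iff (by linarith) hcd).mpr (Or.inl ⟨by linarith, by linarith, by linarith⟩))

/-- Maximal Lifting Theorem: If `e = [a,b]` is an edge of length
at most `2n` not contained in an `n`-periodic 2-triangulation `T`, then
`T ∪ {e}` contains a 3-crossing: there are `f₁, f₂ ∈ T` such that
`{e, f₁, f₂}` are three pairwise crossing edges. -/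
theorem maximal_lifting (n : ℕ) (hn : 1 ≤ n)
    (T : Set Edge) (hT : IsTriangulation n 2 T) (a b : ℤ) (hab : a ≠ b)
    (hlen : |b - a| ≤ 2 * (n : ℤ)) (hnot : ¬ EdgeMem T a b) :
    ∃ f₁ f₂ : Edge, f₁ ∈ T ∧ f₂ ∈ T ∧ f₁ ≠ f₂ ∧
      Crosses f₁ f₂ ∧ Crosses f₁ (a, b) ∧ Crosses f₂ (a, b) := by
  obtain ⟨hval, hper, hfree, hmax⟩ := hT
  rcases hab.lt_or_gt with h | h
  · have hlen' : b - a ≤ 2 * (n : ℤ) := by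
      rwa [abs_of_nonneg (by linarith : (0 : ℤ) ≤ b - a)] at hlen
    exact key hn hval hper hfree hmax h hlen' (fun hm => hnot (Or.inl hm))
  · have hlen' : a - b ≤ 2 * (n : ℤ) := by
      rw [abs_of_nonpos (by linarith : b - a ≤ 0)] at hlen
      linarith
    obtain ⟨f₁, f₂, m1, m2, hne, c12, c1, c2⟩ :=
      key hn hval hper hfree hmax h hlen' (fun hm => hnot (Or.inr hm))
    exact ⟨f₁, f₂, m1, m2, hne, c12, (crosses_pair_swap f₁ b a).mp c1,
      (crosses_pair_swap f₂ b a).mp c2⟩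

end Multitriangulation
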